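/- With the notation of the displacement equation for Hankel-like moment matrices: let R_n(t) = [s_{k,j}]_{t≤k,j≤t+n} be invertible positive definite matrices, let a^t = (a^t_{n,0},...,a^t_{n,n}) satisfy R_n(t) a^t = (0,...,0,(a^t_{n,n})^{-1})ᵀ with a^t_{n,n} > 0, and b^t = (b^t_{n,0},...,b^t_{n,n}) satisfy R_n(t) b^t = ((b^t_{n,0})^{-1},0,...,0)ᵀ with b^t_{n,0} > 0. Define H_n(t) as the 2×(n+1) matrix with first row (conj(a^{t+1}_{n,0}),...,conj(a^{t+1}_{n,n−1}), a^{t+1}_{n,n}) and second row (conj(b^t_{n,1}),...,conj(b^t_{n,n}), 0), F_n(t) the lower shift, J = diag(1,−1). Then R_n(t+1)^{-1} − F_n(t)* R_n(t)^{-1} F_n(t) = H_n(t)* J H_n(t). -/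

import Mathlib

open Matrix

open scoped ComplexConjugate ComplexOrder

private lemma sum_ite_succ_left {n : ℕ} (g : Fin (n+1) → ℂ) (k : Fin (n+1)) :
    (∑ j : Fin (n+1), if (k:ℕ) = (j:ℕ)+1 then g j else 0) =
      if h : 0 < (k:ℕ) then g ⟨(k:ℕ)-1, by omega⟩ else 0 := by
  by_cases h : 0 < (k:ℕ)
  · rw [dif_pos h]
    refine Finset.sum_eq_single_of_mem ⟨(k:ℕ)-1, by omega⟩ (Finset.mem_univ _) ?_ |>.trans ?_
    · intro j _ hj
      rw [if_neg]
      intro hc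
      exact hj (Fin.ext (by simp; omega))
    · rw [if_pos (by simp; omega)]
  · rw [dif_neg h]
    apply Finset.sum_eq_zero
    intro j _
    rw [if_neg (by omega)]

private lemma sum_ite_succ_right {n : ℕ} (g : Fin (n+1) → ℂ) (i : Fin (n+1)) :
    (∑ j : Fin (n+1), if (j:ℕ) = (i:ℕ)+1 then g j else 0) =
      if h : (i:ℕ)+1 ≤ n then g ⟨(i:ℕ)+1, Nat.lt_succ_of_le h⟩ else 0 := by
  by_cases h : (i:ℕ)+1 ≤ n
  · rw [dif_pos h]
    refine Finset.sum_eq_single_of_mem ⟨(i:ℕ)+1, by omega⟩ (Finset.mem_univ _) ?_ |>.trans ?_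
    · intro j _ hj
      rw [if_neg]
      intro hc
      exact hj (Fin.ext (by simpa using hc))
    · rw [if_pos (by simp)]
  · rw [dif_neg h]
    apply Finset.sum_eq_zero
    intro j _
    rw [if_neg (by omega)]

private lemma mul_vecMulVec' {m n p : Type*} [Fintype n] (M : Matrix m n ℂ) (x : n → ℂ) (y : p → ℂ) :
    M * vecMulVec x y = vecMulVec (M *ᵥ x) y := by
  ext i j
  simp [Matrix.mul_apply, vecMulVec_apply, Matrix.mulVec, dotProduct,
    Finset.sum_mul, mul_assoc]

private lemma vecMulVec_mul' {m n p : Type*} [Fintype n] (x : m → ℂ) (y : n → ℂ) (M : Matrix n p ℂ) :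
    vecMulVec x y * M = vecMulVec x (y ᵥ* M) := by
  ext i j
  simp [Matrix.mul_apply, vecMulVec_apply, Matrix.vecMul, dotProduct,
    Finset.mul_sum, mul_assoc]

private lemma vecMulVec_mulVec' {m n : Type*} [Fintype n] (x : m → ℂ) (y : n → ℂ) (zv : n → ℂ) :
    vecMulVec x y *ᵥ zv = (y ⬝ᵥ zv) • x := by
  ext i
  simp [vecMulVec_apply, Matrix.mulVec, dotProduct, Finset.mul_sum, mul_assoc,
    mul_comm, mul_left_comm]

private lemma vecMulVec_sub_right {m n : Type*} (x : m → ℂ) (y y' : n → ℂ) :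
    vecMulVec x (y - y') = vecMulVec x y - vecMulVec x y' := by
  ext i j; simp [vecMulVec_apply, mul_sub]

private lemma vecMulVec_smul_right {m n : Type*} (x : m → ℂ) (c : ℂ) (y : n → ℂ) :
    vecMulVec x (c • y) = c • vecMulVec x y := by
  ext i j; simp [vecMulVec_apply]; ring

private lemma vecMulVec_zero_right {m n : Type*} (x : m → ℂ) :
    vecMulVec x (0 : n → ℂ) = 0 := by
  ext i j; simp [vecMulVec_apply]

private lemma vecMulVec_smul_left {m n : Type*} (c : ℂ) (x : m → ℂ) (y : n → ℂ) :
    vecMulVec (c • x) y = c • vecMulVec x y := by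
  ext i j; simp [vecMulVec_apply]; ring

private lemma vecMulVec_zero_left {m n : Type*} (y : n → ℂ) :
    vecMulVec (0 : m → ℂ) y = 0 := by
  ext i j; simp [vecMulVec_apply]

/-- Displacement structure of the inverses of the moment matrices, in terms of the
coefficients of the orthonormal polynomials.  With `R_n(t) = [s_{k,j}]_{t ≤ k,j ≤ t+n}`
positive definite, `a^t` the coefficient vector of the orthonormal polynomial
(`R_n(t) a^t = (0,…,0,(a^t_{n,n})⁻¹)ᵀ`, `a^t_{n,n} > 0`), `b^t` the coefficient vector of
the reversed polynomial (`R_n(t) b^t = ((b^t_{n,0})⁻¹,0,…,0)ᵀ`, `b^t_{n,0} > 0`),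
`H_n(t)` the `2 × (n+1)` matrix with rows
`(conj a^{t+1}_{n,0}, …, conj a^{t+1}_{n,n-1}, a^{t+1}_{n,n})` and
`(conj b^t_{n,1}, …, conj b^t_{n,n}, 0)`, `F_n(t)` the lower shift and `J = diag(1,-1)`:
`R_n(t+1)⁻¹ - F_n(t)* R_n(t)⁻¹ F_n(t) = H_n(t)* J H_n(t)`. -/
theorem stmt15 (s : ℕ → ℕ → ℂ) (n : ℕ)
    (hherm : ∀ k j, s j k = conj (s k j))
    (R : ℕ → Matrix (Fin (n + 1)) (Fin (n + 1)) ℂ)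
    (hR : R = fun t => Matrix.of fun (i j : Fin (n + 1)) => s (t + i) (t + j))
    (hpd : ∀ t, (R t).PosDef)
    (a b : ℕ → Fin (n + 1) → ℂ)
    (ha : ∀ t, (R t).mulVec (a t) =
      fun (i : Fin (n + 1)) => if (i : ℕ) = n then (a t i)⁻¹ else 0)
    (hapos : ∀ t, 0 < a t (Fin.last n))
    (hb : ∀ t, (R t).mulVec (b t) =
      fun (i : Fin (n + 1)) => if (i : ℕ) = 0 then (b t i)⁻¹ else 0)
    (hbpos : ∀ t, 0 < b t 0)
    (F : Matrix (Fin (n + 1)) (Fin (n + 1)) ℂ)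
    (hF : F = Matrix.of fun (i j : Fin (n + 1)) => if (i : ℕ) = (j : ℕ) + 1 then 1 else 0)
    (J : Matrix (Fin 2) (Fin 2) ℂ) (hJ : J = !![1, 0; 0, -1])
    (H : ℕ → Matrix (Fin 2) (Fin (n + 1)) ℂ)
    (hH : H = fun t => Matrix.of fun (r : Fin 2) (i : Fin (n + 1)) =>
      if (r : ℕ) = 0 then
        (if (i : ℕ) = n then a (t + 1) i else conj (a (t + 1) i))
      else
        (if h : (i : ℕ) + 1 ≤ n then conj (b t ⟨(i : ℕ) + 1, by omega⟩) else 0)) :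
    ∀ t : ℕ, (R (t + 1))⁻¹ - Fᴴ * (R t)⁻¹ * F = (H t)ᴴ * J * H t := by
  intro t
  -- abbreviations
  set A := R (t+1) with hA
  set B := R t with hB
  set u := a (t+1) with hu
  set v := b t with hv
  have hAe : ∀ i j : Fin (n+1), A i j = s (t+1+i) (t+1+j) := by
    intro i j; rw [hA, hR]; rfl
  have hBe : ∀ i j : Fin (n+1), B i j = s (t+i) (t+j) := by
    intro i j; rw [hB, hR]; rfl
  have hFe : ∀ i j : Fin (n+1), F i j = if (i:ℕ) = (j:ℕ)+1 then 1 else 0 := by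
    intro i j; rw [hF]; rfl
  -- positivity facts
  set un := u (Fin.last n) with hun
  set v0 := v 0 with hv0
  have hunpos : 0 < un := hapos (t+1)
  have hv0pos : 0 < v0 := hbpos t
  have hunim : un.im = 0 := by
    have := (Complex.lt_def.mp hunpos).2; simpa using this.symm
  have hv0im : v0.im = 0 := by
    have := (Complex.lt_def.mp hv0pos).2; simpa using this.symm
  have hunstar : conj un = un := Complex.conj_eq_iff_im.mpr hunim
  have hv0star : conj v0 = v0 := Complex.conj_eq_iff_im.mpr hv0im
  have hunne : un ≠ 0 := by
    intro h; rw [h] at hunpos; exact lt_irrefl 0 hunpos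
  have hv0ne : v0 ≠ 0 := by
    intro h; rw [h] at hv0pos; exact lt_irrefl 0 hv0pos
  -- Hermitian-ness
  have hBH : Bᴴ = B := by
    ext i j
    rw [conjTranspose_apply, hBe, hBe]; exact (hherm _ _).symm
  have hAH : Aᴴ = A := by
    ext i j
    rw [conjTranspose_apply, hAe, hAe]; exact (hherm _ _).symm
  -- invertibility
  have hdetA : IsUnit A.det := (hpd (t+1)).det_pos.ne'.isUnit
  have hdetB : IsUnit B.det := (hpd t).det_pos.ne'.isUnit
  -- delta vectors
  set δ0 : Fin (n+1) → ℂ := Pi.single (0 : Fin (n+1)) 1 with hδ0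
  set δn : Fin (n+1) → ℂ := Pi.single (Fin.last n) 1 with hδn
  have hδ0i : ∀ i : Fin (n+1), δ0 i = if (i:ℕ) = 0 then 1 else 0 := by
    intro i
    rw [hδ0, Pi.single_apply]
    congr 1
    rw [Fin.ext_iff, Fin.val_zero]
  have hδni : ∀ i : Fin (n+1), δn i = if (i:ℕ) = n then 1 else 0 := by
    intro i
    rw [hδn, Pi.single_apply]
    congr 1
    simp [Fin.ext_iff]
  have hstarδ0 : star δ0 = δ0 := by
    ext i; simp only [Pi.star_apply, hδ0i]; split <;> simp
  have hstarδn : star δn = δn := by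
    ext i; simp only [Pi.star_apply, hδni]; split <;> simp
  -- the defining equations, in single-vector form
  have hAu : A *ᵥ u = un⁻¹ • δn := by
    have h0 : A *ᵥ u = fun i : Fin (n+1) => if (i:ℕ) = n then (u i)⁻¹ else 0 := ha (t+1)
    rw [h0]
    ext i
    rw [Pi.smul_apply, hδni, hun]
    by_cases h : (i:ℕ) = n
    · have hi : i = Fin.last n := Fin.ext (by simpa using h)
      subst hi
      simp [h]
    · simp [h]
  have hBv : B *ᵥ v = v0⁻¹ • δ0 := by
    have h0 : B *ᵥ v = fun i : Fin (n+1) => if (i:ℕ) = 0 then (v i)⁻¹ else 0 := hb t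
    rw [h0]
    ext i
    rw [Pi.smul_apply, hδ0i, hv0]
    by_cases h : (i:ℕ) = 0
    · have hi : i = 0 := Fin.ext (by simpa using h)
      subst hi
      simp [h]
    · simp [h]
  -- inverse facts
  have hinvB : B⁻¹ * B = 1 := nonsing_inv_mul B hdetB
  have hinvBe0 : B⁻¹ *ᵥ δ0 = v0 • v := by
    have h1 : B *ᵥ (v0 • v) = δ0 := by
      rw [mulVec_smul, hBv, smul_smul, mul_inv_cancel₀ hv0ne, one_smul]
    rw [← h1, mulVec_mulVec, hinvB, one_mulVec]
  have hBinvH : (B⁻¹)ᴴ = B⁻¹ := by rw [conjTranspose_nonsing_inv, hBH]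
  -- the matrix Y
  set Y : Matrix (Fin (n+1)) (Fin (n+1)) ℂ := B⁻¹ - vecMulVec v (star v) with hY
  have hYH : Yᴴ = Y := by
    rw [hY, conjTranspose_sub, hBinvH]
    congr 1
    ext i j
    simp only [conjTranspose_apply, vecMulVec_apply, Pi.star_apply, star_mul', star_star]
    ring
  have hYδ0 : Y *ᵥ δ0 = 0 := by
    rw [hY, sub_mulVec, hinvBe0, vecMulVec_mulVec']
    have h2 : star v ⬝ᵥ δ0 = v0 := by
      rw [hδ0, dotProduct_single]
      simpa [hv0] using hv0star
    rw [h2, sub_self]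
  have hδ0Y : δ0 ᵥ* Y = 0 := by
    rw [← star_star (δ0 ᵥ* Y), star_vecMul, hYH, hstarδ0, hYδ0, star_zero]
  -- action of Fᴴ on vectors
  have hFHmv : ∀ q : Fin (n+1) → ℂ, Fᴴ *ᵥ q =
      fun i : Fin (n+1) => if h : (i:ℕ)+1 ≤ n then q ⟨(i:ℕ)+1, by omega⟩ else 0 := by
    intro q
    ext i
    show (∑ k, Fᴴ i k * q k) = _
    have h1 : ∀ k : Fin (n+1), Fᴴ i k * q k = if (k:ℕ) = (i:ℕ)+1 then q k else 0 := by
      intro k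
      rw [conjTranspose_apply, hFe]
      by_cases hki : (k:ℕ) = (i:ℕ)+1 <;> simp [hki]
    simp_rw [h1]
    exact sum_ite_succ_right q i
  have hFHδ0 : Fᴴ *ᵥ δ0 = 0 := by
    rw [hFHmv]
    ext i
    rw [Pi.zero_apply]
    split
    · rw [hδ0i, if_neg (by simp)]
    · rfl
  have hFHlast : ∀ q : Fin (n+1) → ℂ, (Fᴴ *ᵥ q) (Fin.last n) = 0 := by
    intro q
    rw [hFHmv]
    exact dif_neg (by rw [Fin.val_last]; omega)
  -- the correction vectors
  set c : Fin (n+1) → ℂ := fun i => if (i:ℕ)+1 ≤ n then -s (t+((i:ℕ)+1)) (t+0) else 0 with hcdef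
  set w : Fin (n+1) → ℂ := fun k => if (k:ℕ) = 0 then 0 else s (t+n+1) (t+(k:ℕ)) with hwdef
  set z : Fin (n+1) → ℂ := fun k => s (t+(k:ℕ)) (t+n+1) with hzdef
  -- the fundamental structure lemma
  have L1 : A * Fᴴ = Fᴴ * B + vecMulVec c δ0 + vecMulVec δn w := by
    ext i k
    have lhs : (A * Fᴴ) i k = if h : 0 < (k:ℕ) then A i ⟨(k:ℕ)-1, by omega⟩ else 0 := by
      rw [Matrix.mul_apply]
      have h1 : ∀ j : Fin (n+1), A i j * Fᴴ j k = if (k:ℕ) = (j:ℕ)+1 then A i j else 0 := by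
        intro j
        rw [conjTranspose_apply, hFe]
        by_cases hkj : (k:ℕ) = (j:ℕ)+1 <;> simp [hkj]
      simp_rw [h1]
      exact sum_ite_succ_left _ k
    have rhs1 : (Fᴴ * B) i k = if h : (i:ℕ)+1 ≤ n then B ⟨(i:ℕ)+1, by omega⟩ k else 0 := by
      rw [Matrix.mul_apply]
      have h1 : ∀ j : Fin (n+1), Fᴴ i j * B j k = if (j:ℕ) = (i:ℕ)+1 then B j k else 0 := by
        intro j
        rw [conjTranspose_apply, hFe]
        by_cases hji : (j:ℕ) = (i:ℕ)+1 <;> simp [hji]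
      simp_rw [h1]
      exact sum_ite_succ_right _ i
    rw [Matrix.add_apply, Matrix.add_apply, lhs, rhs1, vecMulVec_apply, vecMulVec_apply,
      hδ0i, hδni, hcdef, hwdef]
    by_cases hk : (k:ℕ) = 0 <;> by_cases hi : (i:ℕ)+1 ≤ n
    · have hin : ¬((i:ℕ) = n) := by omega
      rw [dif_neg (by omega), dif_pos hi, hBe]
      simp only [hk, hi, hin]
      simp
    · have hin : (i:ℕ) = n := by omega
      rw [dif_neg (by omega)]
      simp only [hk, hi, hin]
      simp
    · have hin : ¬((i:ℕ) = n) := by omega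
      rw [dif_pos (by omega), dif_pos hi, hAe, hBe]
      simp only [hk, hi, hin]
      simp only [if_true, if_false, ite_true, ite_false, if_neg hk, if_neg hin, ite_self]
      simp only [mul_zero, mul_one, zero_mul, one_mul, add_zero, zero_add, mul_ite]
      exact congrArg₂ s (by omega) (by omega)
    · have hin : (i:ℕ) = n := by omega
      rw [dif_pos (by omega), dif_neg hi, hAe]
      simp only [hk, hi, hin]
      simp only [if_true, if_false, ite_true, ite_false, if_neg hk, ite_self]
      simp only [mul_zero, mul_one, zero_mul, one_mul, add_zero, zero_add]
      exact congrArg₂ s (by omega) (by omega)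
  have L2 : Fᴴ * F = 1 - vecMulVec δn δn := by
    ext i k
    have lhs : (Fᴴ * F) i k = if h : (i:ℕ)+1 ≤ n then F ⟨(i:ℕ)+1, by omega⟩ k else 0 := by
      rw [Matrix.mul_apply]
      have h1 : ∀ j : Fin (n+1), Fᴴ i j * F j k = if (j:ℕ) = (i:ℕ)+1 then F j k else 0 := by
        intro j
        rw [conjTranspose_apply, hFe]
        by_cases hji : (j:ℕ) = (i:ℕ)+1 <;> simp [hji]
      simp_rw [h1]
      exact sum_ite_succ_right _ i
    rw [Matrix.sub_apply, Matrix.one_apply, vecMulVec_apply, hδni, hδni, lhs]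
    by_cases hi : (i:ℕ)+1 ≤ n
    · rw [dif_pos hi, hFe]
      have hin : ¬((i:ℕ) = n) := by omega
      by_cases hik : i = k
      · subst hik
        simp [hin]
      · have hik' : ¬(((⟨(i:ℕ)+1, by omega⟩ : Fin (n+1)):ℕ) = (k:ℕ)+1) := by
          simp only [Fin.ext_iff] at hik
          simp
          omega
        rw [if_neg hik', if_neg hik]
        simp [hin]
    · have hin : (i:ℕ) = n := by omega
      rw [dif_neg hi]
      by_cases hik : i = k
      · subst hik
        simp [hin]
      · have hkn : ¬((k:ℕ) = n) := by
          simp only [Fin.ext_iff] at hik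
          omega
        rw [if_neg hik]
        simp [hkn]
  -- E1 : A * Fᴴ * Y = Fᴴ + vecMulVec δn (w ᵥ* Y)
  have hBY : B * Y = 1 - v0⁻¹ • vecMulVec δ0 (star v) := by
    rw [hY, mul_sub, mul_nonsing_inv B hdetB, mul_vecMulVec', hBv, vecMulVec_smul_left]
  have E1 : A * Fᴴ * Y = Fᴴ + vecMulVec δn (w ᵥ* Y) := by
    rw [L1, add_mul, add_mul, mul_assoc, hBY, mul_sub, mul_one, Matrix.mul_smul,
      mul_vecMulVec', hFHδ0, vecMulVec_zero_left, smul_zero, sub_zero,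
      vecMulVec_mul', hδ0Y, vecMulVec_zero_right, add_zero, vecMulVec_mul']
  -- the auxiliary vector x
  set x : Fin (n+1) → ℂ := δn - Fᴴ *ᵥ (Y *ᵥ z) with hxdef
  have hFz : Fᴴ *ᵥ z = A *ᵥ δn - (s (t+1+n) (t+1+n)) • δn := by
    rw [hFHmv, hδn]
    ext i
    simp only [Pi.sub_apply, Pi.smul_apply, mulVec_single_one, Matrix.col_apply, mul_one, smul_eq_mul]
    rw [show (Pi.single (Fin.last n) 1 : Fin (n+1) → ℂ) i = if (i:ℕ) = n then 1 else 0 from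
      hδn ▸ hδni i]
    by_cases hi : (i:ℕ)+1 ≤ n
    · rw [dif_pos hi, if_neg (by omega), mul_zero, sub_zero]
      simp only [hzdef]
      rw [hAe, Fin.val_last]
      exact congrArg₂ s (by omega) (by omega)
    · have hieq : i = Fin.last n := Fin.ext (by rw [Fin.val_last]; omega)
      subst hieq
      rw [dif_neg hi, if_pos (Fin.val_last n), mul_one, hAe, Fin.val_last]
      rw [sub_self]
  set κ : ℂ := s (t+1+n) (t+1+n) - (w ᵥ* Y) ⬝ᵥ z with hκdef
  have hAx : A *ᵥ x = κ • δn := by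
    rw [hxdef, mulVec_sub, mulVec_mulVec, mulVec_mulVec, E1, add_mulVec,
      vecMulVec_mulVec', hFz, hκdef, sub_smul]
    module
  have hAinvA : A⁻¹ * A = 1 := nonsing_inv_mul A hdetA
  have hcancel : ∀ p q : Fin (n+1) → ℂ, A *ᵥ p = A *ᵥ q → p = q := by
    intro p q h
    have h2 := congrArg (fun y => A⁻¹ *ᵥ y) h
    simpa only [mulVec_mulVec, hAinvA, one_mulVec] using h2
  have hx1 : x = (κ * un) • u := by
    apply hcancel
    rw [hAx, mulVec_smul, hAu, smul_smul, mul_assoc, mul_inv_cancel₀ hunne, mul_one]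
  have hxlast : x (Fin.last n) = 1 := by
    rw [hxdef, Pi.sub_apply, hFHlast, hδni, if_pos (Fin.val_last n), sub_zero]
  have hκun : κ * un = un⁻¹ := by
    have h2 : (κ * un) * un = 1 := by
      rw [hx1] at hxlast
      rw [Pi.smul_apply, smul_eq_mul, ← hun] at hxlast
      exact hxlast
    have h3 : (κ * un) * (un * un⁻¹) = un⁻¹ := by rw [← mul_assoc, h2, one_mul]
    rwa [mul_inv_cancel₀ hunne, mul_one] at h3
  have hx2 : x = un⁻¹ • u := by rw [hx1, hκun]
  -- transposed key identity
  have hstarw : star w = z - (z 0) • δ0 := by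
    ext k
    rw [Pi.star_apply, Pi.sub_apply, Pi.smul_apply, hδ0i, smul_eq_mul]
    simp only [hwdef, hzdef]
    by_cases hk : (k:ℕ) = 0
    · rw [if_pos hk, if_pos hk, star_zero, mul_one]
      have hk0 : k = 0 := Fin.ext (by simpa using hk)
      subst hk0
      simp
    · rw [if_neg hk, if_neg hk, mul_zero, sub_zero]
      exact (hherm _ _).symm
  have hYw : Y *ᵥ star w = Y *ᵥ z := by
    rw [hstarw, mulVec_sub, mulVec_smul, hYδ0, smul_zero, sub_zero]
  have hq : (w ᵥ* Y) ᵥ* F = δn - un⁻¹ • star u := by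
    have h1 : star ((w ᵥ* Y) ᵥ* F) = Fᴴ *ᵥ (Y *ᵥ z) := by
      rw [star_vecMul, star_vecMul, hYH, hYw]
    have h2 : Fᴴ *ᵥ (Y *ᵥ z) = δn - un⁻¹ • u := by
      have h3 := hx2
      rw [hxdef] at h3
      rw [← h3]
      module
    calc (w ᵥ* Y) ᵥ* F = star (star ((w ᵥ* Y) ᵥ* F)) := (star_star _).symm
      _ = star (δn - un⁻¹ • u) := by rw [h1, h2]
      _ = δn - un⁻¹ • star u := by
          rw [star_sub, hstarδn, star_smul]
          congr 1
          rw [star_inv₀]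
          congr 1
          rw [show star un = un from hunstar]
  -- the explicit inverse of A
  set X : Matrix (Fin (n+1)) (Fin (n+1)) ℂ := Fᴴ * Y * F + vecMulVec u (star u) with hXdef
  have hAX : A * X = 1 := by
    have h1 : A * (Fᴴ * Y * F) = (A * Fᴴ * Y) * F := by rw [← mul_assoc, ← mul_assoc]
    rw [hXdef, mul_add, h1, E1, add_mul, vecMulVec_mul', hq, L2, mul_vecMulVec', hAu,
      vecMulVec_smul_left, vecMulVec_sub_right, vecMulVec_smul_right]
    abel
  have hAinvX : A⁻¹ = X := inv_eq_right_inv hAX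
  -- the left-hand side as a difference of two rank-one matrices
  set g : Fin (n+1) → ℂ := Fᴴ *ᵥ v with hgdef
  have hvF : (star v) ᵥ* F = star g := by
    rw [hgdef, ← star_star (star v ᵥ* F), star_vecMul, star_star]
  have hLHS : A⁻¹ - Fᴴ * B⁻¹ * F = vecMulVec u (star u) - vecMulVec g (star g) := by
    rw [hAinvX, hXdef, hY, mul_sub, sub_mul, mul_vecMulVec', vecMulVec_mul', hvF, ← hgdef]
    abel
  -- entries of H
  have hHe0 : ∀ i : Fin (n+1), H t 0 i = if (i:ℕ) = n then u i else conj (u i) := by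
    intro i; rw [hH]; rfl
  have hHe1 : ∀ i : Fin (n+1), H t 1 i =
      if h : (i:ℕ)+1 ≤ n then conj (v ⟨(i:ℕ)+1, by omega⟩) else 0 := by
    intro i; rw [hH]; rfl
  have e0 : ∀ i : Fin (n+1), star (H t 0 i) = u i := by
    intro i
    rw [hHe0, Complex.star_def]
    by_cases hi : (i:ℕ) = n
    · rw [if_pos hi]
      have : i = Fin.last n := Fin.ext (by simpa using hi)
      subst this
      rw [← hun]
      exact hunstar
    · rw [if_neg hi, Complex.conj_conj]
  have e0' : ∀ j : Fin (n+1), H t 0 j = star u j := by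
    intro j
    rw [← star_star (H t 0 j), e0, Pi.star_apply]
  have e1 : ∀ i : Fin (n+1), star (H t 1 i) = g i := by
    intro i
    rw [hHe1, hgdef, Complex.star_def]
    simp only [hFHmv]
    by_cases hi : (i:ℕ)+1 ≤ n
    · rw [dif_pos hi, dif_pos hi, Complex.conj_conj]
    · rw [dif_neg hi, dif_neg hi, map_zero]
  have e1' : ∀ j : Fin (n+1), H t 1 j = star g j := by
    intro j
    rw [← star_star (H t 1 j), e1, Pi.star_apply]
  have hRHS : ∀ i j : Fin (n+1), ((H t)ᴴ * J * H t) i j =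
      star (H t 0 i) * H t 0 j - star (H t 1 i) * H t 1 j := by
    intro i j
    rw [hJ]
    simp only [Matrix.mul_apply, conjTranspose_apply, Fin.sum_univ_two]
    norm_num
    ring
  rw [hLHS]
  ext i j
  rw [Matrix.sub_apply, vecMulVec_apply, vecMulVec_apply, hRHS, e0, e0', e1, e1']
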